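/- Uniqueness criterion at 0. Let 0 ≤ α < 1 < β, k := ⌈α+β⌉, A := {0,…,k−1}. The string u^{α,β} always satisfies φ̄_∞^{α,β}(u^{α,β}) = 0 and φ̄_∞^{α,β}(σu^{α,β}) = α, and the following are equivalent: (1) the pair of equations φ̄_∞^{α,β}(u) = 0 and φ̄_∞^{α,β}(σu) = α has exactly one solution u ∈ A^ℕ; (2) either T̂_{α,β}(0) = 0 (i.e. 0 is a fixed point, equivalently α = 0), or T̂ⁿ_{α,β}(0) ≠ 0 for all n ≥ 1; (3) u^{α,β} is not periodic (σᵖu^{α,β} ≠ u^{α,β} for all p ≥ 1) or u^{α,β} is the constant string 0^∞. -/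

import Mathlib

open Filter Set

/-- The shift map on one-sided sequences. -/
def shft (x : ℕ → ℕ) : ℕ → ℕ := fun n => x (n + 1)

/-- Strict lexicographic order on one-sided sequences:
`x ≺ y` iff they differ and `x m < y m` at the first index `m` where they differ. -/
def lexLt (x y : ℕ → ℕ) : Prop := ∃ m, (∀ i, i < m → x i = y i) ∧ x m < y m

/-- Lexicographic order `x ≼ y` on one-sided sequences. -/
def lexLe (x y : ℕ → ℕ) : Prop := x = y ∨ lexLt x y

/-- The map `φ̄^{α,β} : ℝ → [0,1]`:  `0` for `t ≤ α`, `(t-α)/β` for `α ≤ t ≤ α+β`,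
`1` for `t ≥ α+β`. -/
noncomputable def phiB (α β t : ℝ) : ℝ :=
  if t ≤ α then 0 else if α + β ≤ t then 1 else (t - α) / β

/-- `φ̄ₙ^{α,β}(x) = φ̄^{α,β}(x₀ + φ̄^{α,β}(x₁ + ⋯ + φ̄^{α,β}(x_{n-1})⋯))`. -/
noncomputable def phiBN (α β : ℝ) : ℕ → (ℕ → ℕ) → ℝ
  | 0, _ => 0
  | n + 1, x => phiB α β (x 0 + phiBN α β n (shft x))

/-- `φ̄_∞^{α,β}(x) = limₙ φ̄ₙ^{α,β}(x)`; the sequence `φ̄ₙ^{α,β}(x)` is nondecreasing in `n`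
and bounded, so its limit is its supremum. -/
noncomputable def phiBInf (α β : ℝ) (x : ℕ → ℕ) : ℝ := ⨆ n, phiBN α β n x

/-- `T̂_{α,β}(x) = βx + α − ⌊βx + α⌋`. -/
noncomputable def Tlow (α β x : ℝ) : ℝ := β * x + α - ⌊β * x + α⌋

/-- `Ť_{α,β}(x) = βx + α + 1 − ⌈βx + α⌉`. -/
noncomputable def Thigh (α β x : ℝ) : ℝ := β * x + α + 1 - ⌈β * x + α⌉

/-- `k = ⌈α + β⌉`, the size of the alphabet `A = {0, …, k-1}`. -/
noncomputable def kAB (α β : ℝ) : ℕ := (⌈α + β⌉).toNat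

/-- The string `u^{α,β}`, the coding of the orbit of `0`:
`u^{α,β}ₙ = ⌊β T̂ⁿ_{α,β}(0) + α⌋`. -/
noncomputable def uItin (α β : ℝ) : ℕ → ℕ := fun n => (⌊β * (Tlow α β)^[n] 0 + α⌋).toNat

/-- The string `v^{α,β}`, the coding of the orbit of `1`:
`v^{α,β}ₙ = ⌈β Ťⁿ_{α,β}(1) + α⌉ − 1`. -/
noncomputable def vItin (α β : ℝ) : ℕ → ℕ := fun n => (⌈β * (Thigh α β)^[n] 1 + α⌉ - 1).toNat

/-- The shift space `Σ(u,v) = {x ∈ A^ℕ : u ≼ σⁿx ≼ v for all n ≥ 0}`, `A = {0,…,k-1}`. -/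
def SigSet (k : ℕ) (u v : ℕ → ℕ) : Set (ℕ → ℕ) :=
  {x | (∀ i, x i < k) ∧ ∀ n, lexLe u (shft^[n] x) ∧ lexLe (shft^[n] x) v}

/-- The number of words of length `n` in the language of `Σ(u,v)` (prefixes of elements). -/
noncomputable def nWords (k : ℕ) (u v : ℕ → ℕ) (n : ℕ) : ℕ :=
  Nat.card {w : Fin n → ℕ // ∃ x ∈ SigSet k u v, ∀ i : Fin n, x i.1 = w i}

/-- The topological entropy (base 2) of `Σ(u,v)`:
`h = limₙ (1/n) log₂ card(Lₙ)` (the limit exists by subadditivity, so it equals the limsup;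
it is `0` when `Σ(u,v) = ∅`). -/
noncomputable def entS (k : ℕ) (u v : ℕ → ℕ) : ℝ :=
  Filter.limsup (fun n : ℕ => Real.logb 2 (nWords k u v n) / (n : ℝ)) Filter.atTop

/-- Concatenation of the word `w₀ ⋯ w_{p-1}` (the first `p` letters of `w`) with the
string `y`. -/
def wcat (p : ℕ) (w y : ℕ → ℕ) : ℕ → ℕ := fun n => if n < p then w n else y (n - p)

-- helpers
lemma real_le_of_forall_pos {a b : ℝ} (h : ∀ ε : ℝ, 0 < ε → a ≤ b + ε) : a ≤ b := by
  by_contra hc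
  push_neg at hc
  have := h ((a - b)/2) (by linarith)
  linarith

lemma shft_iter (y : ℕ → ℕ) (m i : ℕ) : shft^[m] y i = y (m + i) := by
  induction m generalizing y with
  | zero => simp
  | succ m ih =>
    rw [Function.iterate_succ_apply, ih]
    simp only [shft]
    congr 1
    omega

lemma clamp_sub_le {A B : ℝ} (h : A ≤ B) :
    max 0 (min 1 B) - max 0 (min 1 A) ≤ B - A := by
  have h1 : min 1 B - min 1 A ≤ B - A := by
    rcases le_total 1 A with hA | hA
    · rw [min_eq_left hA, min_eq_left (hA.trans h)]; linarith
    · rw [min_eq_right hA]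
      rcases le_total 1 B with hB | hB
      · rw [min_eq_left hB]; linarith
      · rw [min_eq_right hB]
  have hm : min 1 A ≤ min 1 B := min_le_min le_rfl h
  rcases le_total (min 1 A) 0 with hA0 | hA0
  · rw [max_eq_left hA0]
    rcases le_total (min 1 B) 0 with hB0 | hB0
    · rw [max_eq_left hB0]; linarith
    · rw [max_eq_right hB0]; linarith
  · rw [max_eq_right hA0, max_eq_right (hA0.trans hm)]; linarith

lemma phiB_eq {α β : ℝ} (hβ : 0 < β) (t : ℝ) :
    phiB α β t = max 0 (min 1 ((t - α) / β)) := by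
  unfold phiB
  split_ifs with h1 h2
  · have hd : (t - α) / β ≤ 0 := div_nonpos_of_nonpos_of_nonneg (by linarith) hβ.le
    rw [min_eq_right (hd.trans zero_le_one), max_eq_left hd]
  · have hd : 1 ≤ (t - α) / β := (one_le_div hβ).mpr (by linarith)
    rw [min_eq_left hd, max_eq_right zero_le_one]
  · have hd0 : 0 ≤ (t - α) / β := div_nonneg (by linarith) hβ.le
    have hd1 : (t - α) / β ≤ 1 := by rw [div_le_one hβ]; linarith
    rw [min_eq_right hd1, max_eq_right hd0]

lemma phiB_nonneg {α β : ℝ} (hβ : 0 < β) (t : ℝ) : 0 ≤ phiB α β t := by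
  rw [phiB_eq hβ]; exact le_max_left _ _

lemma phiB_le_one {α β : ℝ} (hβ : 0 < β) (t : ℝ) : phiB α β t ≤ 1 := by
  rw [phiB_eq hβ]; exact max_le zero_le_one (min_le_left _ _)

lemma phiB_mono {α β : ℝ} (hβ : 0 < β) : Monotone (phiB α β) := by
  intro a b hab
  rw [phiB_eq hβ, phiB_eq hβ]
  exact max_le_max le_rfl (min_le_min le_rfl (by gcongr))

lemma phiB_sub_le {α β : ℝ} (hβ : 0 < β) {a b : ℝ} (h : a ≤ b) :
    phiB α β b - phiB α β a ≤ (b - a) / β := by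
  rw [phiB_eq hβ, phiB_eq hβ]
  have := clamp_sub_le (A := (a - α)/β) (B := (b - α)/β) (by gcongr)
  have heq : (b - α)/β - (a - α)/β = (b - a)/β := by ring
  linarith

lemma phiB_lip {α β : ℝ} (hβ : 0 < β) (a b : ℝ) :
    |phiB α β a - phiB α β b| ≤ |a - b| / β := by
  rcases le_total a b with h | h
  · have hm := phiB_mono (α := α) hβ h
    rw [abs_of_nonpos (by linarith : phiB α β a - phiB α β b ≤ 0),
      abs_of_nonpos (by linarith : a - b ≤ 0), neg_sub, neg_sub]
    exact phiB_sub_le hβ h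
  · have hm := phiB_mono (α := α) hβ h
    rw [abs_of_nonneg (by linarith : 0 ≤ phiB α β a - phiB α β b),
      abs_of_nonneg (by linarith : 0 ≤ a - b)]
    exact phiB_sub_le hβ h

lemma phiB_eq_zero_iff {α β : ℝ} (hβ : 0 < β) (t : ℝ) : phiB α β t = 0 ↔ t ≤ α := by
  unfold phiB
  split_ifs with h1 h2
  · simp [h1]
  · constructor
    · intro h; norm_num at h
    · intro h; linarith
  · have : 0 < (t - α) / β := div_pos (by linarith) hβ
    constructor
    · intro h; linarith
    · intro h; linarith

lemma phiB_eq_one_of {α β : ℝ} (hβ : 0 < β) {t : ℝ} (ht : α + β ≤ t) : phiB α β t = 1 := by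
  have h1 : ¬ t ≤ α := by linarith
  rw [phiB, if_neg h1, if_pos ht]

lemma phiB_inv {α β : ℝ} (hβ : 0 < β) {t z : ℝ} (h : phiB α β t = z)
    (h0 : 0 < z) (h1 : z < 1) : t = β * z + α := by
  unfold phiB at h
  split_ifs at h with ha hb
  · linarith
  · linarith
  · field_simp at h
    linarith

lemma phiB_fixed {α β : ℝ} (hβ : 0 < β) (hα0 : 0 ≤ α) {z : ℝ} (hz : 0 ≤ z) (hz1 : z < 1) :
    phiB α β (β * z + α) = z := by
  unfold phiB
  split_ifs with h1 h2
  · nlinarith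
  · nlinarith
  · field_simp
    ring

lemma phiBN_succ (α β : ℝ) (n : ℕ) (x : ℕ → ℕ) :
    phiBN α β (n + 1) x = phiB α β (x 0 + phiBN α β n (shft x)) := rfl

lemma phiBN_nonneg {α β : ℝ} (hβ : 0 < β) (n : ℕ) (x : ℕ → ℕ) : 0 ≤ phiBN α β n x := by
  cases n with
  | zero => exact le_rfl
  | succ n => exact phiB_nonneg hβ _

lemma phiBN_le_one {α β : ℝ} (hβ : 0 < β) (n : ℕ) (x : ℕ → ℕ) : phiBN α β n x ≤ 1 := by
  cases n with
  | zero => exact zero_le_one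
  | succ n => exact phiB_le_one hβ _

lemma phiBN_le_succ {α β : ℝ} (hβ : 0 < β) (n : ℕ) :
    ∀ x : ℕ → ℕ, phiBN α β n x ≤ phiBN α β (n + 1) x := by
  induction n with
  | zero => intro x; exact phiB_nonneg hβ _
  | succ n ih =>
    intro x
    rw [phiBN_succ, phiBN_succ]
    exact phiB_mono hβ (by have := ih (shft x); linarith)

lemma phiBN_mono {α β : ℝ} (hβ : 0 < β) (x : ℕ → ℕ) :
    Monotone (fun n => phiBN α β n x) :=
  monotone_nat_of_le_succ (fun n => phiBN_le_succ hβ n x)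

lemma phiBN_bdd {α β : ℝ} (hβ : 0 < β) (x : ℕ → ℕ) :
    BddAbove (Set.range fun n => phiBN α β n x) := by
  refine ⟨1, ?_⟩
  rintro _ ⟨n, rfl⟩
  exact phiBN_le_one hβ n x

lemma phiBInf_nonneg {α β : ℝ} (hβ : 0 < β) (x : ℕ → ℕ) : 0 ≤ phiBInf α β x := by
  have h := le_ciSup (phiBN_bdd (α := α) hβ x) 0
  exact h

lemma phiBInf_le_one {α β : ℝ} (hβ : 0 < β) (x : ℕ → ℕ) : phiBInf α β x ≤ 1 :=
  ciSup_le (fun n => phiBN_le_one hβ n x)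

lemma phiBN_le_phiBInf {α β : ℝ} (hβ : 0 < β) (x : ℕ → ℕ) (n : ℕ) :
    phiBN α β n x ≤ phiBInf α β x :=
  le_ciSup (phiBN_bdd hβ x) n

lemma phiBInf_rec {α β : ℝ} (hβ : 0 < β) (y : ℕ → ℕ) :
    phiBInf α β y = phiB α β (y 0 + phiBInf α β (shft y)) := by
  apply le_antisymm
  · apply ciSup_le
    intro n
    cases n with
    | zero => exact phiB_nonneg hβ _
    | succ n =>
      rw [phiBN_succ]
      exact phiB_mono hβ (by
        have h := phiBN_le_phiBInf (α := α) hβ (shft y) n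
        linarith)
  · apply real_le_of_forall_pos
    intro ε hε
    have hlt : phiBInf α β (shft y) - ε * β < phiBInf α β (shft y) := by nlinarith
    obtain ⟨n, hn⟩ := exists_lt_of_lt_ciSup hlt
    have hle : phiBN α β n (shft y) ≤ phiBInf α β (shft y) := phiBN_le_phiBInf hβ _ n
    have hsub := phiB_sub_le (α := α) hβ
      (a := (y 0 : ℝ) + phiBN α β n (shft y)) (b := (y 0 : ℝ) + phiBInf α β (shft y))
      (by linarith)
    have h2 : ((y 0 : ℝ) + phiBInf α β (shft y)) - ((y 0 : ℝ) + phiBN α β n (shft y))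
        = phiBInf α β (shft y) - phiBN α β n (shft y) := by ring
    rw [h2] at hsub
    have h3 : (phiBInf α β (shft y) - phiBN α β n (shft y)) / β < ε := by
      rw [div_lt_iff₀ hβ]; linarith
    have h4 : phiB α β ((y 0 : ℝ) + phiBN α β n (shft y)) = phiBN α β (n + 1) y := rfl
    have h5 := phiBN_le_phiBInf (α := α) hβ y (n + 1)
    linarith

lemma orbit_mem {α β : ℝ} (n : ℕ) : 0 ≤ (Tlow α β)^[n] 0 ∧ (Tlow α β)^[n] 0 < 1 := by
  induction n with
  | zero => exact ⟨le_rfl, one_pos⟩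
  | succ n _ =>
    rw [Function.iterate_succ_apply']
    have h : Tlow α β ((Tlow α β)^[n] 0) = Int.fract (β * (Tlow α β)^[n] 0 + α) := rfl
    rw [h]
    exact ⟨Int.fract_nonneg _, Int.fract_lt_one _⟩

lemma digit_id {α β : ℝ} (hβ : 0 < β) (hα0 : 0 ≤ α) (n : ℕ) :
    β * (Tlow α β)^[n] 0 + α = (uItin α β n : ℝ) + (Tlow α β)^[n + 1] 0 := by
  have hx := orbit_mem (α := α) (β := β) n
  have h0 : 0 ≤ β * (Tlow α β)^[n] 0 + α := by nlinarith [hx.1]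
  have hcast : (uItin α β n : ℝ) = ((⌊β * (Tlow α β)^[n] 0 + α⌋ : ℤ) : ℝ) := by
    unfold uItin
    have h5 := Int.toNat_of_nonneg (Int.floor_nonneg.mpr h0)
    exact_mod_cast congrArg (fun z : ℤ => (z : ℝ)) h5
  rw [hcast, Function.iterate_succ_apply']
  have h : Tlow α β ((Tlow α β)^[n] 0)
      = β * (Tlow α β)^[n] 0 + α - ⌊β * (Tlow α β)^[n] 0 + α⌋ := rfl
  rw [h]
  ring

lemma kAB_two_le {α β : ℝ} (hβ : 1 < β) (hα0 : 0 ≤ α) : 2 ≤ kAB α β := by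
  have h1 : (1 : ℤ) < ⌈α + β⌉ := by
    rw [Int.lt_ceil]
    push_cast
    linarith
  unfold kAB
  omega

lemma kAB_cast {α β : ℝ} (hβ : 1 < β) (hα0 : 0 ≤ α) :
    α + β ≤ ((kAB α β : ℕ) : ℝ) := by
  have h1 : (0 : ℤ) ≤ ⌈α + β⌉ := Int.ceil_nonneg (by linarith)
  have h2 : ((kAB α β : ℕ) : ℝ) = ((⌈α + β⌉ : ℤ) : ℝ) := by
    unfold kAB
    exact_mod_cast congrArg (fun z : ℤ => (z : ℝ)) (Int.toNat_of_nonneg h1)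
  rw [h2]
  exact Int.le_ceil _

lemma digit_lt_k {α β : ℝ} (hβ : 1 < β) (hα0 : 0 ≤ α) (n : ℕ) :
    uItin α β n < kAB α β := by
  have hx := orbit_mem (α := α) (β := β) n
  have h1 : ⌊β * (Tlow α β)^[n] 0 + α⌋ < ⌈α + β⌉ := by
    have h2 : β * (Tlow α β)^[n] 0 + α < α + β := by nlinarith [hx.1, hx.2]
    have h3 : (⌊β * (Tlow α β)^[n] 0 + α⌋ : ℝ) ≤ β * (Tlow α β)^[n] 0 + α :=
      Int.floor_le _
    have h4 : α + β ≤ (⌈α + β⌉ : ℝ) := Int.le_ceil _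
    exact_mod_cast lt_of_le_of_lt h3 (lt_of_lt_of_le h2 h4)
  have h0 : (0 : ℤ) ≤ ⌊β * (Tlow α β)^[n] 0 + α⌋ :=
    Int.floor_nonneg.mpr (by nlinarith [hx.1])
  unfold uItin kAB
  omega

lemma V_rec_iter {α β : ℝ} (hβ0 : 0 < β) (y : ℕ → ℕ) (m : ℕ) :
    phiBInf α β (shft^[m] y)
      = phiB α β ((y m : ℝ) + phiBInf α β (shft^[m + 1] y)) := by
  rw [phiBInf_rec hβ0 (shft^[m] y), ← Function.iterate_succ_apply' shft m y,
    shft_iter y m 0, Nat.add_zero, Function.iterate_succ_apply' shft m y,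
    ← Function.iterate_succ_apply' shft m y]

lemma fixed_id {α β : ℝ} (hβ0 : 0 < β) (hα0 : 0 ≤ α) (m : ℕ) :
    phiB α β ((uItin α β m : ℝ) + (Tlow α β)^[m + 1] 0) = (Tlow α β)^[m] 0 := by
  rw [← digit_id hβ0 hα0 m]
  exact phiB_fixed hβ0 hα0 (orbit_mem m).1 (orbit_mem m).2

lemma V_orbit {α β : ℝ} (hα0 : 0 ≤ α) (hβ : 1 < β) (m : ℕ) :
    phiBInf α β (shft^[m] (uItin α β)) = (Tlow α β)^[m] 0 := by
  have hβ0 : 0 < β := by linarith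
  have key : ∀ n m : ℕ,
      |(Tlow α β)^[m] 0 - phiBInf α β (shft^[m] (uItin α β))| ≤ (1 / β) ^ n := by
    intro n
    induction n with
    | zero =>
      intro m
      have h1 := orbit_mem (α := α) (β := β) m
      have h2 := phiBInf_nonneg (α := α) hβ0 (shft^[m] (uItin α β))
      have h3 := phiBInf_le_one (α := α) hβ0 (shft^[m] (uItin α β))
      rw [pow_zero]
      rw [abs_le]
      constructor <;> [linarith [h1.1]; linarith [h1.2]]
    | succ n ih =>
      intro m
      rw [V_rec_iter hβ0 (uItin α β) m, ← fixed_id hβ0 hα0 m]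
      have hl := phiB_lip (α := α) hβ0
        ((uItin α β m : ℝ) + (Tlow α β)^[m + 1] 0)
        ((uItin α β m : ℝ) + phiBInf α β (shft^[m + 1] (uItin α β)))
      have heq : ((uItin α β m : ℝ) + (Tlow α β)^[m + 1] 0)
          - ((uItin α β m : ℝ) + phiBInf α β (shft^[m + 1] (uItin α β)))
          = (Tlow α β)^[m + 1] 0 - phiBInf α β (shft^[m + 1] (uItin α β)) := by ring
      rw [heq] at hl
      have ih1 := ih (m + 1)
      have hd : |(Tlow α β)^[m+1] 0 - phiBInf α β (shft^[m+1] (uItin α β))| / β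
          ≤ (1 / β) ^ n / β := by
        gcongr
      calc |phiB α β ((uItin α β m : ℝ) + (Tlow α β)^[m + 1] 0)
          - phiB α β ((uItin α β m : ℝ) + phiBInf α β (shft^[m + 1] (uItin α β)))|
          ≤ |(Tlow α β)^[m+1] 0 - phiBInf α β (shft^[m+1] (uItin α β))| / β := hl
        _ ≤ (1 / β) ^ n / β := hd
        _ = (1 / β) ^ (n + 1) := by
            rw [pow_succ]
            ring
  have habs : |(Tlow α β)^[m] 0 - phiBInf α β (shft^[m] (uItin α β))| = 0 := by
    have hle : |(Tlow α β)^[m] 0 - phiBInf α β (shft^[m] (uItin α β))| ≤ 0 := by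
      apply real_le_of_forall_pos
      intro ε hε
      obtain ⟨n, hn⟩ := exists_pow_lt_of_lt_one hε (by
        rw [div_lt_one hβ0]; linarith : 1 / β < 1)
      have := key n m
      linarith
    linarith [abs_nonneg ((Tlow α β)^[m] 0 - phiBInf α β (shft^[m] (uItin α β)))]
  have := abs_eq_zero.mp habs
  linarith

lemma V_one {α β : ℝ} (hα0 : 0 ≤ α) (hβ : 1 < β) :
    phiBInf α β (fun _ => kAB α β - 1) = 1 := by
  have hβ0 : 0 < β := by linarith
  have hk2 := kAB_two_le hβ hα0
  have hkR := kAB_cast hβ hα0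
  set c : ℕ → ℕ := fun _ => kAB α β - 1 with hc
  have hshft : shft c = c := rfl
  have hcast : ((kAB α β - 1 : ℕ) : ℝ) = (kAB α β : ℝ) - 1 := by
    push_cast [Nat.cast_sub (by omega : 1 ≤ kAB α β)]
    ring
  have bound : ∀ n, 1 - phiBN α β n c ≤ (1 / β) ^ n := by
    intro n
    induction n with
    | zero => simp [phiBN]
    | succ n ih =>
      have h1 : phiB α β ((c 0 : ℝ) + 1) = 1 := by
        apply phiB_eq_one_of hβ0
        rw [hc]
        rw [hcast]  -- (c 0 : ℝ) = kAB - 1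
        linarith
      have h2 : phiBN α β (n + 1) c = phiB α β ((c 0 : ℝ) + phiBN α β n c) := by
        rw [phiBN_succ, hshft]
      have h3 := phiB_sub_le (α := α) hβ0
        (a := (c 0 : ℝ) + phiBN α β n c) (b := (c 0 : ℝ) + 1)
        (by linarith [phiBN_le_one (α := α) hβ0 n c])
      have h4 : ((c 0 : ℝ) + 1) - ((c 0 : ℝ) + phiBN α β n c) = 1 - phiBN α β n c := by
        ring
      rw [h4, h1] at h3
      have h5 : (1 - phiBN α β n c) / β ≤ (1 / β) ^ n / β := by
        gcongr
      rw [h2]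
      calc 1 - phiB α β ((c 0 : ℝ) + phiBN α β n c) ≤ (1 - phiBN α β n c) / β := by
            linarith
        _ ≤ (1 / β) ^ n / β := h5
        _ = (1 / β) ^ (n + 1) := by rw [pow_succ]; ring
  apply le_antisymm (phiBInf_le_one hβ0 c)
  apply real_le_of_forall_pos
  intro ε hε
  obtain ⟨n, hn⟩ := exists_pow_lt_of_lt_one hε (by
    rw [div_lt_one hβ0]; linarith : 1 / β < 1)
  have h6 := bound n
  have h7 := phiBN_le_phiBInf (α := α) hβ0 c n
  linarith

lemma Tzero_eq {α β : ℝ} (hα0 : 0 ≤ α) (hα1 : α < 1) : Tlow α β 0 = α := by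
  unfold Tlow
  rw [mul_zero, zero_add, Int.floor_eq_zero_iff.mpr ⟨hα0, hα1⟩]
  simp

lemma x1_eq {α β : ℝ} (hα0 : 0 ≤ α) (hα1 : α < 1) : (Tlow α β)^[1] 0 = α := by
  rw [Function.iterate_one]; exact Tzero_eq hα0 hα1

lemma alpha_zero_of_u_zero {α β : ℝ} (hα0 : 0 ≤ α) (hα1 : α < 1) (hβ : 1 < β)
    (hu : ∀ n, uItin α β n = 0) : α = 0 := by
  by_contra hα
  have hαpos : 0 < α := lt_of_le_of_ne hα0 (Ne.symm hα)
  have hβ0 : 0 < β := by linarith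
  have grow : ∀ n : ℕ, (n : ℝ) * α ≤ (Tlow α β)^[n] 0 := by
    intro n
    induction n with
    | zero => simp
    | succ n ih =>
      have hid := digit_id hβ0 hα0 n
      rw [hu n] at hid
      push_cast at hid
      have hx := orbit_mem (α := α) (β := β) n
      push_cast
      nlinarith [hx.1]
  obtain ⟨n, hn⟩ := exists_nat_gt (1 / α)
  have h2 := grow n
  have h3 := (orbit_mem (α := α) (β := β) n).2
  rw [div_lt_iff₀ hαpos] at hn
  nlinarith

lemma forced_step {α β : ℝ} (hα0 : 0 ≤ α) (hβ : 1 < β) (y : ℕ → ℕ) (m : ℕ)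
    (hm : phiBInf α β (shft^[m] y) = (Tlow α β)^[m] 0)
    (hxm : (Tlow α β)^[m] 0 ≠ 0) (hxm1 : (Tlow α β)^[m + 1] 0 ≠ 0) :
    y m = uItin α β m ∧ phiBInf α β (shft^[m + 1] y) = (Tlow α β)^[m + 1] 0 := by
  have hβ0 : 0 < β := by linarith
  have hx := orbit_mem (α := α) (β := β) m
  have hx1 := orbit_mem (α := α) (β := β) (m + 1)
  have hxmpos : 0 < (Tlow α β)^[m] 0 := lt_of_le_of_ne hx.1 (Ne.symm hxm)
  have hxm1pos : 0 < (Tlow α β)^[m + 1] 0 := lt_of_le_of_ne hx1.1 (Ne.symm hxm1)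
  have h1 : phiB α β ((y m : ℝ) + phiBInf α β (shft^[m + 1] y)) = (Tlow α β)^[m] 0 := by
    rw [← V_rec_iter hβ0 y m]; exact hm
  have h2 := phiB_inv hβ0 h1 hxmpos hx.2
  have key : (y m : ℝ) + phiBInf α β (shft^[m + 1] y)
      = (uItin α β m : ℝ) + (Tlow α β)^[m + 1] 0 := by
    rw [h2]
    exact digit_id hβ0 hα0 m
  have hW0 := phiBInf_nonneg (α := α) hβ0 (shft^[m + 1] y)
  have hW1 := phiBInf_le_one (α := α) hβ0 (shft^[m + 1] y)
  have e1 : ((y m : ℕ) : ℤ) < ((uItin α β m : ℕ) : ℤ) + 1 := by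
    have : ((y m : ℕ) : ℝ) < ((uItin α β m : ℕ) : ℝ) + 1 := by linarith [hx1.2]
    exact_mod_cast this
  have e2 : ((uItin α β m : ℕ) : ℤ) < ((y m : ℕ) : ℤ) + 1 := by
    have : ((uItin α β m : ℕ) : ℝ) < ((y m : ℕ) : ℝ) + 1 := by linarith
    exact_mod_cast this
  have heq : y m = uItin α β m := by omega
  refine ⟨heq, ?_⟩
  rw [heq] at key
  linarith

lemma two_solutions {α β : ℝ} (hα0 : 0 ≤ α) (hα1 : α < 1) (hβ : 1 < β) (hαpos : 0 < α)
    (p : ℕ) (hp2 : 2 ≤ p) (hpz : (Tlow α β)^[p] 0 = 0) :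
    ∃ w : ℕ → ℕ, (∀ i, w i < kAB α β) ∧ phiBInf α β w = 0 ∧
      phiBInf α β (shft w) = α ∧ w ≠ uItin α β := by
  have hβ0 : 0 < β := by linarith
  have hid := digit_id hβ0 hα0 (p - 1)
  rw [show p - 1 + 1 = p by omega, hpz, add_zero] at hid
  have hup : 1 ≤ uItin α β (p - 1) := by
    by_contra h
    push_neg at h
    have h0 : uItin α β (p - 1) = 0 := by omega
    rw [h0] at hid
    push_cast at hid
    nlinarith [(orbit_mem (α := α) (β := β) (p - 1)).1]
  set w : ℕ → ℕ := fun i =>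
    if i < p - 1 then uItin α β i else if i = p - 1 then uItin α β (p - 1) - 1
    else kAB α β - 1 with hw
  have hk2 := kAB_two_le hβ hα0
  have hwdig : ∀ i, w i < kAB α β := by
    intro i
    simp only [hw]
    split_ifs with h1 h2
    · exact digit_lt_k hβ hα0 i
    · have := digit_lt_k hβ hα0 (p - 1); omega
    · omega
  have htail : shft^[p] w = fun _ => kAB α β - 1 := by
    funext i
    simp only [shft_iter, hw]
    rw [if_neg (by omega), if_neg (by omega)]
  have hVtail : phiBInf α β (shft^[p] w) = 1 := by rw [htail]; exact V_one hα0 hβ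
  have hwp : w (p - 1) = uItin α β (p - 1) - 1 := by
    simp only [hw]
    split_ifs with h1
    · omega
    · rfl
  have hbase : phiBInf α β (shft^[p - 1] w) = (Tlow α β)^[p - 1] 0 := by
    rw [V_rec_iter hβ0 w (p - 1), show p - 1 + 1 = p by omega, hVtail, hwp]
    have hcast : ((uItin α β (p - 1) - 1 : ℕ) : ℝ) + 1 = (uItin α β (p - 1) : ℝ) := by
      rw [Nat.cast_sub hup]; push_cast; ring
    rw [hcast]
    have hfix := fixed_id hβ0 hα0 (p - 1)
    rw [show p - 1 + 1 = p by omega, hpz, add_zero] at hfix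
    exact hfix
  have down : ∀ j m, m + j = p - 1 → phiBInf α β (shft^[m] w) = (Tlow α β)^[m] 0 := by
    intro j
    induction j with
    | zero => intro m hm; rw [show m = p - 1 by omega]; exact hbase
    | succ j ih =>
      intro m hm
      have ihm := ih (m + 1) (by omega)
      rw [V_rec_iter hβ0 w m, ihm]
      have hwm : w m = uItin α β m := by
        simp only [hw]
        rw [if_pos (by omega)]
      rw [hwm]
      exact fixed_id hβ0 hα0 m
  refine ⟨w, hwdig, ?_, ?_, ?_⟩
  · have h := down (p - 1) 0 (by omega)
    simpa using h
  · have h := down (p - 2) 1 (by omega)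
    rw [x1_eq hα0 hα1] at h
    rwa [Function.iterate_one] at h
  · intro heq
    have h := congrFun heq (p - 1)
    rw [hwp] at h
    omega


/-- **Uniqueness criterion at 0.** Let `0 ≤ α < 1 < β`, `k = ⌈α+β⌉`. The string `u^{α,β}`
always satisfies `φ̄_∞^{α,β}(u^{α,β}) = 0` and `φ̄_∞^{α,β}(σ u^{α,β}) = α`, and the
following are equivalent: (1) the equations `φ̄_∞^{α,β}(u) = 0`, `φ̄_∞^{α,β}(σu) = α`
have exactly one solution `u ∈ A^ℕ`; (2) either `T̂_{α,β}(0) = 0` or `T̂ⁿ_{α,β}(0) ≠ 0`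
for all `n ≥ 1`; (3) `u^{α,β}` is not periodic or `u^{α,β} = 0^∞`. -/
theorem uniqueness_at_zero (α β : ℝ) (hα0 : 0 ≤ α) (hα1 : α < 1) (hβ : 1 < β) :
    (phiBInf α β (uItin α β) = 0 ∧ phiBInf α β (shft (uItin α β)) = α) ∧
    ((∃! u : ℕ → ℕ, (∀ i, u i < kAB α β) ∧
        phiBInf α β u = 0 ∧ phiBInf α β (shft u) = α) ↔
      (Tlow α β 0 = 0 ∨ ∀ n, 1 ≤ n → (Tlow α β)^[n] 0 ≠ 0)) ∧
    ((Tlow α β 0 = 0 ∨ ∀ n, 1 ≤ n → (Tlow α β)^[n] 0 ≠ 0) ↔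
      ((∀ p, 1 ≤ p → shft^[p] (uItin α β) ≠ uItin α β) ∨
        uItin α β = fun _ => 0)) := by
  have hβ0 : 0 < β := by linarith
  have hV : ∀ m, phiBInf α β (shft^[m] (uItin α β)) = (Tlow α β)^[m] 0 :=
    V_orbit hα0 hβ
  have hV0 : phiBInf α β (uItin α β) = 0 := by
    have h := hV 0
    simpa using h
  have hV1 : phiBInf α β (shft (uItin α β)) = α := by
    have h := hV 1
    rwa [Function.iterate_one, x1_eq hα0 hα1] at h
  have hT0 : Tlow α β 0 = α := Tzero_eq hα0 hα1
  have hu0 : uItin α β 0 = 0 := by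
    unfold uItin
    rw [Function.iterate_zero_apply, mul_zero, zero_add,
      Int.floor_eq_zero_iff.mpr ⟨hα0, hα1⟩]
    rfl
  -- the case α = 0 : all iterates vanish, uItin = 0
  have hxz : α = 0 → ∀ n, (Tlow α β)^[n] 0 = 0 := by
    intro h0 n
    induction n with
    | zero => rfl
    | succ n ih =>
      rw [Function.iterate_succ_apply', ih, hT0, h0]
  have huz : α = 0 → ∀ n, uItin α β n = 0 := by
    intro h0 n
    unfold uItin
    rw [hxz h0 n, mul_zero, zero_add, h0]
    simp
  refine ⟨⟨hV0, hV1⟩, ?_, ?_⟩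
  · -- (1) ↔ (2)
    by_cases hα : α = 0
    · have hTzero : Tlow α β 0 = 0 := by rw [hT0, hα]
      constructor
      · intro _; exact Or.inl hTzero
      · intro _
        refine ⟨uItin α β, ⟨fun n => digit_lt_k hβ hα0 n, hV0, hV1⟩, ?_⟩
        rintro y ⟨hyd, hy0, hy1⟩
        have claim : ∀ n, phiBInf α β (shft^[n] y) = 0 := by
          intro n
          induction n with
          | zero => simpa using hy0
          | succ n ih =>
            have hrec := V_rec_iter (α := α) hβ0 y n
            rw [ih] at hrec
            have hle := (phiB_eq_zero_iff hβ0 _).mp hrec.symm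
            have hW0 := phiBInf_nonneg (α := α) hβ0 (shft^[n + 1] y)
            have hyn : (0 : ℝ) ≤ (y n : ℝ) := Nat.cast_nonneg _
            have hα' : α = (0 : ℝ) := hα
            exact le_antisymm (by linarith) hW0
        funext n
        have hrec := V_rec_iter (α := α) hβ0 y n
        rw [claim n, claim (n + 1)] at hrec
        have hle := (phiB_eq_zero_iff hβ0 _).mp hrec.symm
        have hα' : α = (0 : ℝ) := hα
        have hyn : (y n : ℝ) ≤ 0 := by linarith
        have : y n = 0 := by exact_mod_cast le_antisymm (by exact_mod_cast hyn) (Nat.zero_le _)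
        rw [this, huz hα n]
    · have hαpos : 0 < α := lt_of_le_of_ne hα0 (Ne.symm hα)
      have hTa : Tlow α β 0 ≠ 0 := by rw [hT0]; exact hα
      constructor
      · intro hEU
        right
        intro n hn
        by_contra hpz
        have hp2 : 2 ≤ n := by
          rcases Nat.lt_or_ge n 2 with h | h
          · exfalso
            have hn1 : n = 1 := by omega
            rw [hn1, x1_eq hα0 hα1] at hpz
            exact hα hpz
          · exact h
        obtain ⟨w, hwd, hw0, hw1, hwne⟩ := two_solutions hα0 hα1 hβ hαpos n hp2 hpz
        obtain ⟨z, _, huniq⟩ := hEU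
        have h1 := huniq w ⟨hwd, hw0, hw1⟩
        have h2 := huniq (uItin α β) ⟨fun i => digit_lt_k hβ hα0 i, hV0, hV1⟩
        exact hwne (h1.trans h2.symm)
      · intro H
        have H' : ∀ n, 1 ≤ n → (Tlow α β)^[n] 0 ≠ 0 := by
          rcases H with h | h
          · exact absurd h hTa
          · exact h
        refine ⟨uItin α β, ⟨fun n => digit_lt_k hβ hα0 n, hV0, hV1⟩, ?_⟩
        rintro y ⟨hyd, hy0, hy1⟩
        have hy0' : y 0 = 0 := by
          have hrec := phiBInf_rec (α := α) hβ0 y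
          rw [hy0] at hrec
          have hle := (phiB_eq_zero_iff hβ0 _).mp hrec.symm
          rw [hy1] at hle
          have : (y 0 : ℝ) ≤ 0 := by linarith
          exact_mod_cast le_antisymm (by exact_mod_cast this) (Nat.zero_le _)
        have claim : ∀ j, phiBInf α β (shft^[1 + j] y) = (Tlow α β)^[1 + j] 0 := by
          intro j
          induction j with
          | zero =>
            have h1 : (1 : ℕ) + 0 = 1 := rfl
            rw [h1, Function.iterate_one, x1_eq hα0 hα1]
            exact hy1
          | succ j ih =>
            have hst := forced_step hα0 hβ y (1 + j) ih (H' (1 + j) (by omega))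
              (by rw [show 1 + j + 1 = 1 + (j + 1) by omega]; exact H' (1 + (j + 1)) (by omega))
            rw [show 1 + (j + 1) = 1 + j + 1 by omega]
            exact hst.2
        funext m
        cases m with
        | zero => rw [hy0', hu0]
        | succ m =>
          have hst := (forced_step hα0 hβ y (1 + m) (claim m) (H' (1 + m) (by omega))
            (by rw [show 1 + m + 1 = 1 + (m + 1) by omega]; exact H' (1 + (m + 1)) (by omega))).1
          rw [show m + 1 = 1 + m by omega]
          exact hst
  · -- (2) ↔ (3)
    by_cases hα : α = 0
    · constructor
      · intro _
        right
        funext n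
        exact huz hα n
      · intro _
        exact Or.inl (by rw [hT0, hα])
    · have hαpos : 0 < α := lt_of_le_of_ne hα0 (Ne.symm hα)
      have hTa : Tlow α β 0 ≠ 0 := by rw [hT0]; exact hα
      constructor
      · rintro (h | h)
        · exact absurd h hTa
        · left
          intro pp hpp heq
          have hvp := hV pp
          rw [heq, hV0] at hvp
          exact h pp hpp hvp.symm
      · rintro (h | h)
        · right
          intro n hn
          by_contra hz
          apply h n hn
          funext i
          rw [shft_iter]
          have hper : (Tlow α β)^[i + n] 0 = (Tlow α β)^[i] 0 := by
            rw [Function.iterate_add_apply, hz]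
          unfold uItin
          rw [show n + i = i + n by omega, hper]
        · exact absurd (alpha_zero_of_u_zero hα0 hα1 hβ (fun n => congrFun h n)) hα
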